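/- Let G be a (P_5, K_{1,4}+P_1)-free graph with χ(G) ≤ k−1, containing an induced antihole C = complement of C_{2t+1} (2 ≤ t, vertices v_1,...,v_{2t+1} with v_i v_j ∈ E iff |i−j|>1). For any nonempty proper subset X of V(C) with 1 ≤ |X| ≤ 2t, the set S(X) of vertices outside C whose neighborhood on C is exactly X has stability number at most 3, and hence |S(X)| ≤ R(4, k−2). -/

import Mathlib

open SimpleGraph

/-- `G` contains no induced subgraph isomorphic to `H`. -/
def HFree {W V : Type*} (H : SimpleGraph W) (G : SimpleGraph V) : Prop :=
  IsEmpty (H ↪g G)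

/-- `G` is `k`-vertex-critical: `χ(G) = k` and deleting any vertex decreases
the chromatic number below `k`. -/
def IsKVertexCritical {V : Type*} (G : SimpleGraph V) (k : ℕ) : Prop :=
  G.chromaticNumber = k ∧ ∀ v : V, (G.induce {v}ᶜ).chromaticNumber < k

/-- The star `K_{1,s}`: center `0`, leaves `1, …, s`. -/
def starGraph (s : ℕ) : SimpleGraph (Fin (s + 1)) :=
  SimpleGraph.fromRel (fun i _ => (i : ℕ) = 0)

/-- `K_{1,s} + P_1`: the disjoint union of the star `K_{1,s}`
(center `0`, leaves `1, …, s`) and the isolated vertex `s + 1`. -/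
def starPlusP1 (s : ℕ) : SimpleGraph (Fin (s + 2)) :=
  SimpleGraph.fromRel (fun i j => (i : ℕ) = 0 ∧ (j : ℕ) ≠ 0 ∧ (j : ℕ) ≤ s)

/-- The complement of `K_3 + 2P_1`: vertices `0,1,2` pairwise nonadjacent,
vertices `3,4` adjacent to everything else. -/
def coK3Plus2P1 : SimpleGraph (Fin 5) :=
  SimpleGraph.fromRel (fun i j => 3 ≤ (i : ℕ) ∨ 3 ≤ (j : ℕ))

/-- `n` has the Ramsey property for `(s, t)`: every simple graph on `n` vertices
contains a stable set of size `s` or a clique of size `t`. -/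
def HasRamseyProp (n s t : ℕ) : Prop :=
  ∀ G : SimpleGraph (Fin n),
    (∃ A : Set (Fin n), A.ncard = s ∧ ∀ a ∈ A, ∀ b ∈ A, a ≠ b → ¬ G.Adj a b) ∨
    (∃ B : Set (Fin n), B.ncard = t ∧ ∀ a ∈ B, ∀ b ∈ B, a ≠ b → G.Adj a b)

/-- The Ramsey number `R(s, t)`. -/
noncomputable def ramseyNum (s t : ℕ) : ℕ := sInf {n | HasRamseyProp n s t}

open Fin.NatCast Fin.CommRing

/-! ### Ramsey machinery -/

lemma ramsey_apply {s t m : ℕ} (h : HasRamseyProp m s t) {W : Type*} (H : SimpleGraph W)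
    (S : Set W) (hSfin : S.Finite) (hm : m ≤ S.ncard) :
    (∃ A : Set W, A ⊆ S ∧ A.ncard = s ∧ ∀ a ∈ A, ∀ b ∈ A, a ≠ b → ¬ H.Adj a b) ∨
    (∃ B : Set W, B ⊆ S ∧ B.ncard = t ∧ ∀ a ∈ B, ∀ b ∈ B, a ≠ b → H.Adj a b) := by
  obtain ⟨T, hTS, hT⟩ := Set.exists_subset_card_eq hm
  have hTfin : T.Finite := hSfin.subset hTS
  haveI : Fintype T := hTfin.fintype
  have hcard : Fintype.card T = m := by
    rw [← Nat.card_eq_fintype_card, Nat.card_coe_set_eq, hT]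
  obtain e : Fin m ≃ T := (Fintype.equivFinOfCardEq hcard).symm
  set φ : Fin m → W := fun a => (e a : W) with hφ
  have hφinj : Function.Injective φ := fun a b hab => e.injective (Subtype.ext hab)
  have hφT : ∀ a, φ a ∈ T := fun a => (e a).2
  rcases h (H.comap φ) with ⟨A, hA, hAst⟩ | ⟨B, hB, hBcl⟩
  · left
    refine ⟨φ '' A, ?_, ?_, ?_⟩
    · rintro _ ⟨a, _, rfl⟩; exact hTS (hφT a)
    · rw [Set.ncard_image_of_injective _ hφinj, hA]
    · rintro _ ⟨a, ha, rfl⟩ _ ⟨b, hb, rfl⟩ hne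
      exact hAst a ha b hb (fun hh => hne (by rw [hh]))
  · right
    refine ⟨φ '' B, ?_, ?_, ?_⟩
    · rintro _ ⟨a, _, rfl⟩; exact hTS (hφT a)
    · rw [Set.ncard_image_of_injective _ hφinj, hB]
    · rintro _ ⟨a, ha, rfl⟩ _ ⟨b, hb, rfl⟩ hne
      exact hBcl a ha b hb (fun hh => hne (by rw [hh]))

lemma hasRamseyProp_zero_left (n t : ℕ) : HasRamseyProp n 0 t := fun _ =>
  Or.inl ⟨∅, by simp, by simp⟩

lemma hasRamseyProp_zero_right (n s : ℕ) : HasRamseyProp n s 0 := fun _ =>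
  Or.inr ⟨∅, by simp, by simp⟩

lemma ramsey_step {s t n1 n2 : ℕ} (h1 : HasRamseyProp n1 s (t+1))
    (h2 : HasRamseyProp n2 (s+1) t) : HasRamseyProp (n1 + n2 + 1) (s+1) (t+1) := by
  intro H
  set v : Fin (n1 + n2 + 1) := ⟨0, Nat.succ_pos _⟩ with hv
  set N : Set (Fin (n1+n2+1)) := {u | H.Adj v u} with hN
  set M : Set (Fin (n1+n2+1)) := {u | u ≠ v ∧ ¬ H.Adj v u} with hM
  have hvN : v ∉ N := fun h => H.loopless.irrefl v h
  have hvM : v ∉ M := fun h => h.1 rfl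
  have hdisj : Disjoint N M := by
    rw [Set.disjoint_left]; rintro u hu ⟨_, hu2⟩; exact hu2 hu
  have hcover : insert v (N ∪ M) = Set.univ := by
    ext u; simp only [Set.mem_insert_iff, Set.mem_union, Set.mem_univ, iff_true, hN, hM,
      Set.mem_setOf_eq]
    by_cases h : u = v
    · exact Or.inl h
    · by_cases h2 : H.Adj v u
      · exact Or.inr (Or.inl h2)
      · exact Or.inr (Or.inr ⟨h, h2⟩)
  have hsum : N.ncard + M.ncard + 1 = n1 + n2 + 1 := by
    have h1' : (insert v (N ∪ M)).ncard = (N ∪ M).ncard + 1 :=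
      Set.ncard_insert_of_notMem (by simp [hvN, hvM]) (Set.toFinite _)
    have h2' : (N ∪ M).ncard = N.ncard + M.ncard :=
      Set.ncard_union_eq hdisj (Set.toFinite _) (Set.toFinite _)
    have h3' : (Set.univ : Set (Fin (n1+n2+1))).ncard = n1 + n2 + 1 := by
      rw [Set.ncard_univ, Nat.card_eq_fintype_card, Fintype.card_fin]
    rw [hcover, h3', h2'] at h1'
    omega
  have hcase : n1 ≤ M.ncard ∨ n2 ≤ N.ncard := by omega
  rcases hcase with hc | hc
  · rcases ramsey_apply h1 H M (Set.toFinite _) hc with ⟨A, hAM, hA, hAst⟩ | ⟨B, _, hB, hBcl⟩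
    · left
      have hvA : v ∉ A := fun h => hvM (hAM h)
      refine ⟨insert v A, ?_, ?_⟩
      · rw [Set.ncard_insert_of_notMem hvA (Set.toFinite _), hA]
      · intro a ha b hb hne
        rcases ha with rfl | ha <;> rcases hb with rfl | hb
        · exact absurd rfl hne
        · exact (hAM hb).2
        · exact fun h => (hAM ha).2 h.symm
        · exact hAst a ha b hb hne
    · right; exact ⟨B, hB, hBcl⟩
  · rcases ramsey_apply h2 H N (Set.toFinite _) hc with ⟨A, _, hA, hAst⟩ | ⟨B, hBN, hB, hBcl⟩
    · left; exact ⟨A, hA, hAst⟩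
    · right
      have hvB : v ∉ B := fun h => hvN (hBN h)
      refine ⟨insert v B, ?_, ?_⟩
      · rw [Set.ncard_insert_of_notMem hvB (Set.toFinite _), hB]
      · intro a ha b hb hne
        rcases ha with rfl | ha <;> rcases hb with rfl | hb
        · exact absurd rfl hne
        · exact hBN hb
        · exact (hBN ha).symm
        · exact hBcl a ha b hb hne

lemma ramsey_exists (s t : ℕ) : ∃ n, HasRamseyProp n s t := by
  induction s generalizing t with
  | zero => exact ⟨0, hasRamseyProp_zero_left 0 t⟩
  | succ s ihs =>
    induction t with
    | zero => exact ⟨0, hasRamseyProp_zero_right 0 (s+1)⟩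
    | succ t iht =>
      obtain ⟨n1, h1⟩ := ihs (t+1)
      obtain ⟨n2, h2⟩ := iht
      exact ⟨n1 + n2 + 1, ramsey_step h1 h2⟩

lemma hasRamseyProp_ramseyNum (s t : ℕ) : HasRamseyProp (ramseyNum s t) s t := by
  obtain ⟨n, hn⟩ := ramsey_exists s t
  exact Nat.sInf_mem (⟨n, hn⟩ : Set.Nonempty {n | HasRamseyProp n s t})

lemma ramsey_lower {q n : ℕ} (hq : 2 ≤ q) (h : HasRamseyProp n 4 q) : 2 * q ≤ n := by
  by_contra hn
  push_neg at hn
  set β : Fin n → Fin 3 := fun a =>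
    if (a : ℕ) < q - 1 then 0 else if (a : ℕ) < 2 * (q - 1) then 1 else 2 with hβ
  set H : SimpleGraph (Fin n) := SimpleGraph.fromRel (fun a b => β a = β b) with hH
  rcases h H with ⟨A, hA, hAst⟩ | ⟨B, hB, hBcl⟩
  · have hinj : Set.InjOn β A := by
      intro a ha b hb hab
      by_contra hne
      exact hAst a ha b hb hne ((SimpleGraph.fromRel_adj _ a b).2 ⟨hne, Or.inl hab⟩)
    have h4 : (β '' A).ncard = 4 := by rw [Set.ncard_image_of_injOn hinj, hA]
    have h3 : (β '' A).ncard ≤ 3 := by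
      have := Set.ncard_le_ncard (Set.subset_univ (β '' A)) (Set.toFinite _)
      rwa [Set.ncard_univ, Nat.card_eq_fintype_card, Fintype.card_fin] at this
    omega
  · have hBne : B.Nonempty := Set.nonempty_of_ncard_ne_zero (by omega)
    obtain ⟨x0, hx0⟩ := hBne
    have hsame : ∀ b ∈ B, β b = β x0 := by
      intro b hb
      by_cases hbe : b = x0
      · rw [hbe]
      · have := hBcl b hb x0 hx0 hbe
        rw [hH, SimpleGraph.fromRel_adj] at this
        rcases this.2 with h | h
        · exact h
        · exact h.symm
    obtain ⟨lo, hi, hlohi, hmem⟩ :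
        ∃ lo hi : ℕ, hi - lo ≤ q - 1 ∧ ∀ b ∈ B, (b : ℕ) ∈ Set.Ico lo hi := by
      by_cases c0 : (x0 : ℕ) < q - 1
      · refine ⟨0, q - 1, by omega, fun b hb => ?_⟩
        have := hsame b hb
        rw [hβ] at this
        simp only [c0, if_true] at this
        split_ifs at this with h1 h2
        · simp [Set.mem_Ico]; omega
        · exact absurd this (by decide)
        · exact absurd this (by decide)
      · by_cases c1 : (x0 : ℕ) < 2 * (q - 1)
        · refine ⟨q - 1, 2 * (q - 1), by omega, fun b hb => ?_⟩
          have := hsame b hb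
          rw [hβ] at this
          simp only [c0, if_false, c1, if_true] at this
          split_ifs at this with h1 h2
          · exact absurd this (by decide)
          · simp [Set.mem_Ico]; omega
          · exact absurd this (by decide)
        · refine ⟨2 * (q - 1), 2 * (q - 1) + 1, by omega, fun b hb => ?_⟩
          have := hsame b hb
          rw [hβ] at this
          simp only [c0, if_false, c1] at this
          split_ifs at this with h1 h2
          · exact absurd this (by decide)
          · exact absurd this (by decide)
          · simp only [Set.mem_Ico]
            have hblt : (b : ℕ) < n := b.isLt
            omega
    have hval : Set.InjOn (fun b : Fin n => (b : ℕ)) B := fun a _ b _ h => Fin.ext h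
    have hq1 : B.ncard ≤ q - 1 := by
      have h1 : ((fun b : Fin n => (b : ℕ)) '' B).ncard = B.ncard :=
        Set.ncard_image_of_injOn hval
      have h2 : ((fun b : Fin n => (b : ℕ)) '' B) ⊆ Set.Ico lo hi := by
        rintro _ ⟨b, hb, rfl⟩; exact hmem b hb
      have h3 : ((fun b : Fin n => (b : ℕ)) '' B).ncard ≤ (Set.Ico lo hi).ncard := by
        exact Set.ncard_le_ncard h2
          (by rw [← Finset.coe_Ico]; exact (Finset.Ico lo hi).finite_toSet)
      have h4 : (Set.Ico lo hi).ncard = hi - lo := by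
        rw [← Finset.coe_Ico, Set.ncard_coe_finset, Nat.card_Ico]
      omega
    omega

/-! ### Fin arithmetic and antihole helpers -/

lemma fin_cast_inj {n : ℕ} [NeZero n] {a b : ℕ} (ha : a < n) (hb : b < n) :
    ((a : Fin n) = (b : Fin n)) ↔ a = b := by
  rw [Fin.ext_iff, Fin.val_natCast, Fin.val_natCast, Nat.mod_eq_of_lt ha, Nat.mod_eq_of_lt hb]

lemma exists_boundary {n : ℕ} [NeZero n] (X : Set (Fin n)) (hX1 : X.Nonempty)
    (hX2 : X ≠ Set.univ) : ∃ i, i ∈ X ∧ i + 1 ∉ X := by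
  by_contra h
  push_neg at h
  obtain ⟨i0, hi0⟩ := hX1
  have key : ∀ m : ℕ, i0 + (m : Fin n) ∈ X := by
    intro m; induction m with
    | zero => simpa using hi0
    | succ m ih =>
        have := h _ ih
        have e : (((m+1 : ℕ)) : Fin n) = (m : Fin n) + 1 := by push_cast; ring
        rw [e, ← add_assoc]
        exact this
  apply hX2
  ext j; simp only [Set.mem_univ, iff_true]
  have := key (j - i0).val
  rwa [Fin.cast_val_eq_self, add_sub_cancel] at this

section AntiHole

variable {V : Type*} {G : SimpleGraph V} {t : ℕ}

lemma antihole_adj (ht : 2 ≤ t) (f : ((cycleGraph (2*t+1))ᶜ) ↪g G) (a b : Fin (2*t+1)) :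
    G.Adj (f a) (f b) ↔ (a ≠ b ∧ a ≠ b + 1 ∧ b ≠ a + 1) := by
  rw [f.map_adj_iff, compl_adj, cycleGraph_adj']
  have hval : ∀ x y : Fin (2*t+1), (x - y).val = 1 ↔ x = y + 1 := by
    intro x y
    constructor
    · intro h
      have h1 : x - y = 1 := by
        apply Fin.ext
        rw [h, Fin.val_one', Nat.mod_eq_of_lt (by omega)]
      have := sub_eq_iff_eq_add.mp h1
      rw [this]; ring
    · rintro rfl
      have h1 : y + 1 - y = 1 := by ring
      rw [h1, Fin.val_one', Nat.mod_eq_of_lt (by omega)]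
  rw [hval, hval]
  constructor
  · rintro ⟨h1, h2⟩; push_neg at h2; exact ⟨h1, h2.1, h2.2⟩
  · rintro ⟨h1, h2, h3⟩; exact ⟨h1, by push_neg; exact ⟨h2, h3⟩⟩

lemma cast_eq_cast_mod {n : ℕ} [NeZero n] {c d : ℕ} (hc : c < n) :
    ((c : Fin n) = (d : Fin n)) ↔ c = d % n := by
  rw [Fin.ext_iff, Fin.val_natCast, Fin.val_natCast, Nat.mod_eq_of_lt hc]

lemma shift_eq_shift_iff {n : ℕ} [NeZero n] (i : Fin n) {c d : ℕ} (hc : c < n) (hd : d < n) :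
    (i + (c : ℕ) = i + (d : ℕ)) ↔ c = d := by
  rw [add_right_inj, fin_cast_inj hc hd]

lemma shift_ne_shift {n : ℕ} [NeZero n] (i : Fin n) {c d : ℕ} (hc : c < n) (hd : d < n)
    (h : c ≠ d) : i + (c : ℕ) ≠ i + (d : ℕ) :=
  fun hh => h ((shift_eq_shift_iff i hc hd).1 hh)

lemma shift_adj (ht : 2 ≤ t) (f : ((cycleGraph (2*t+1))ᶜ) ↪g G) (i : Fin (2*t+1))
    {c d : ℕ} (hc : c < 2*t+1) (hd : d < 2*t+1) :
    G.Adj (f (i + (c : ℕ))) (f (i + (d : ℕ))) ↔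
      (c ≠ d ∧ (c ≠ d + 1 ∧ c + (2*t+1) ≠ d + 1) ∧ (d ≠ c + 1 ∧ d + (2*t+1) ≠ c + 1)) := by
  have key : ∀ x y : ℕ, x < 2*t+1 → y < 2*t+1 →
      ((i + (x : ℕ) = (i + (y : ℕ)) + 1) ↔ ¬(x ≠ y + 1 ∧ x + (2*t+1) ≠ y + 1)) := by
    intro x y hx hy
    have e1 : (i + (y : ℕ)) + 1 = i + ((y + 1 : ℕ) : Fin (2*t+1)) := by push_cast; ring
    rw [e1, add_right_inj, cast_eq_cast_mod hx]
    rcases Nat.lt_or_ge (y+1) (2*t+1) with h | h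
    · rw [Nat.mod_eq_of_lt h]; omega
    · have hy1 : y + 1 = 2*t+1 := by omega
      rw [hy1, Nat.mod_self]; omega
  rw [antihole_adj ht f]
  simp only [ne_eq, shift_eq_shift_iff i hc hd, key c d hc hd, key d c hd hc]
  tauto

lemma antihole_not_two_colorable (ht : 2 ≤ t) (f : ((cycleGraph (2*t+1))ᶜ) ↪g G) :
    ¬ G.Colorable 2 := by
  rintro ⟨C⟩
  have add_one_ne : ∀ a : Fin 2, a ≠ a + 1 := by decide
  have ne_imp : ∀ a b : Fin 2, a ≠ b → a = b + 1 := by decide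
  have step : ∀ j : Fin (2*t+1), C (f (j + ((2 : ℕ) : Fin (2*t+1)))) = C (f j) + 1 := by
    intro j
    apply ne_imp
    apply C.valid
    have := (shift_adj ht f j (c := 2) (d := 0) (by omega) (by omega)).2 (by omega)
    simpa using this
  have key : ∀ m : ℕ,
      C (f ((0 : Fin (2*t+1)) + ((2*m : ℕ) : Fin (2*t+1)))) = C (f 0) + ((m : ℕ) : Fin 2) := by
    intro m
    induction m with
    | zero => simp
    | succ m ih =>
      have e : (0 : Fin (2*t+1)) + ((2*(m+1) : ℕ) : Fin (2*t+1)) =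
          ((0 : Fin (2*t+1)) + ((2*m : ℕ) : Fin (2*t+1))) + ((2:ℕ) : Fin (2*t+1)) := by
        push_cast; ring
      rw [e, step, ih]
      push_cast
      ring
  have hfin : ((2*(2*t+1) : ℕ) : Fin (2*t+1)) = 0 := by
    rw [Fin.natCast_eq_zero]
    exact ⟨2, by ring⟩
  have h1 := key (2*t+1)
  rw [hfin] at h1
  simp only [add_zero] at h1
  have h2 : ((2*t+1 : ℕ) : Fin 2) = 1 := by
    rw [Fin.ext_iff, Fin.val_natCast]
    omega
  rw [h2] at h1
  exact add_one_ne _ h1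

end AntiHole

/-! ### Building explicit embeddings -/

section Build

variable {V : Type*} {G : SimpleGraph V}

lemma build_starPlusP1 (x0 x1 x2 x3 x4 x5 : V)
    (d01 : x0 ≠ x1) (d02 : x0 ≠ x2) (d03 : x0 ≠ x3) (d04 : x0 ≠ x4) (d05 : x0 ≠ x5)
    (d12 : x1 ≠ x2) (d13 : x1 ≠ x3) (d14 : x1 ≠ x4) (d15 : x1 ≠ x5)
    (d23 : x2 ≠ x3) (d24 : x2 ≠ x4) (d25 : x2 ≠ x5)
    (d34 : x3 ≠ x4) (d35 : x3 ≠ x5) (d45 : x4 ≠ x5)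
    (A01 : G.Adj x0 x1) (A02 : G.Adj x0 x2) (A03 : G.Adj x0 x3) (A04 : G.Adj x0 x4)
    (N05 : ¬ G.Adj x0 x5)
    (N12 : ¬ G.Adj x1 x2) (N13 : ¬ G.Adj x1 x3) (N14 : ¬ G.Adj x1 x4) (N15 : ¬ G.Adj x1 x5)
    (N23 : ¬ G.Adj x2 x3) (N24 : ¬ G.Adj x2 x4) (N25 : ¬ G.Adj x2 x5)
    (N34 : ¬ G.Adj x3 x4) (N35 : ¬ G.Adj x3 x5) (N45 : ¬ G.Adj x4 x5) :
    Nonempty (starPlusP1 4 ↪g G) := by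
  have d10 := d01.symm; have d20 := d02.symm; have d30 := d03.symm
  have d40 := d04.symm; have d50 := d05.symm; have d21 := d12.symm
  have d31 := d13.symm; have d41 := d14.symm; have d51 := d15.symm
  have d32 := d23.symm; have d42 := d24.symm; have d52 := d25.symm
  have d43 := d34.symm; have d53 := d35.symm; have d54 := d45.symm
  have A10 := A01.symm; have A20 := A02.symm; have A30 := A03.symm; have A40 := A04.symm
  have N50 : ¬ G.Adj x5 x0 := fun h => N05 h.symm
  have N21 : ¬ G.Adj x2 x1 := fun h => N12 h.symm
  have N31 : ¬ G.Adj x3 x1 := fun h => N13 h.symm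
  have N41 : ¬ G.Adj x4 x1 := fun h => N14 h.symm
  have N51 : ¬ G.Adj x5 x1 := fun h => N15 h.symm
  have N32 : ¬ G.Adj x3 x2 := fun h => N23 h.symm
  have N42 : ¬ G.Adj x4 x2 := fun h => N24 h.symm
  have N52 : ¬ G.Adj x5 x2 := fun h => N25 h.symm
  have N43 : ¬ G.Adj x4 x3 := fun h => N34 h.symm
  have N53 : ¬ G.Adj x5 x3 := fun h => N35 h.symm
  have N54 : ¬ G.Adj x5 x4 := fun h => N45 h.symm
  set v : Fin 6 → V := ![x0, x1, x2, x3, x4, x5] with hv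
  have hinj : Function.Injective v := by
    have key : ∀ u w : Fin 6, u ≠ w → v u ≠ v w := by
      intro u w huw
      fin_cases u <;> fin_cases w <;> simp only [hv] <;>
        first
          | (exact absurd rfl huw)
          | (simp; assumption)
    intro u w h
    by_contra hne
    exact key u w hne h
  refine ⟨⟨⟨v, hinj⟩, ?_⟩⟩
  intro u w
  fin_cases u <;> fin_cases w <;>
    simp [hv, starPlusP1, SimpleGraph.fromRel_adj,
      show ((0:Fin 6):ℕ) = 0 from rfl, show ((1:Fin 6):ℕ) = 1 from rfl,
      show ((2:Fin 6):ℕ) = 2 from rfl, show ((3:Fin 6):ℕ) = 3 from rfl,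
      show ((4:Fin 6):ℕ) = 4 from rfl, show ((5:Fin 6):ℕ) = 5 from rfl] <;>
    assumption

lemma build_pathGraph5 (x0 x1 x2 x3 x4 : V)
    (d01 : x0 ≠ x1) (d02 : x0 ≠ x2) (d03 : x0 ≠ x3) (d04 : x0 ≠ x4)
    (d12 : x1 ≠ x2) (d13 : x1 ≠ x3) (d14 : x1 ≠ x4)
    (d23 : x2 ≠ x3) (d24 : x2 ≠ x4) (d34 : x3 ≠ x4)
    (A01 : G.Adj x0 x1) (A12 : G.Adj x1 x2) (A23 : G.Adj x2 x3) (A34 : G.Adj x3 x4)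
    (N02 : ¬ G.Adj x0 x2) (N03 : ¬ G.Adj x0 x3) (N04 : ¬ G.Adj x0 x4)
    (N13 : ¬ G.Adj x1 x3) (N14 : ¬ G.Adj x1 x4) (N24 : ¬ G.Adj x2 x4) :
    Nonempty (pathGraph 5 ↪g G) := by
  have d10 := d01.symm; have d20 := d02.symm; have d30 := d03.symm; have d40 := d04.symm
  have d21 := d12.symm; have d31 := d13.symm; have d41 := d14.symm
  have d32 := d23.symm; have d42 := d24.symm; have d43 := d34.symm
  have A10 := A01.symm; have A21 := A12.symm; have A32 := A23.symm; have A43 := A34.symm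
  have N20 : ¬ G.Adj x2 x0 := fun h => N02 h.symm
  have N30 : ¬ G.Adj x3 x0 := fun h => N03 h.symm
  have N40 : ¬ G.Adj x4 x0 := fun h => N04 h.symm
  have N31 : ¬ G.Adj x3 x1 := fun h => N13 h.symm
  have N41 : ¬ G.Adj x4 x1 := fun h => N14 h.symm
  have N42 : ¬ G.Adj x4 x2 := fun h => N24 h.symm
  set v : Fin 5 → V := ![x0, x1, x2, x3, x4] with hv
  have hinj : Function.Injective v := by
    have key : ∀ u w : Fin 5, u ≠ w → v u ≠ v w := by
      intro u w huw
      fin_cases u <;> fin_cases w <;> simp only [hv] <;>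
        first
          | (exact absurd rfl huw)
          | (simp; assumption)
    intro u w h
    by_contra hne
    exact key u w hne h
  refine ⟨⟨⟨v, hinj⟩, ?_⟩⟩
  intro u w
  fin_cases u <;> fin_cases w <;>
    simp [hv, pathGraph_adj,
      show ((0:Fin 5):ℕ) = 0 from rfl, show ((1:Fin 5):ℕ) = 1 from rfl,
      show ((2:Fin 5):ℕ) = 2 from rfl, show ((3:Fin 5):ℕ) = 3 from rfl,
      show ((4:Fin 5):ℕ) = 4 from rfl] <;>
    first
      | assumption
      | exact G.irrefl

end Build

/-! ### counting with a coloring -/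

lemma count_le_of_stability {V : Type*} [Fintype V] {G : SimpleGraph V} {S : Set V} {n : ℕ}
    (C : G.Coloring (Fin n)) (c0 : Fin n)
    (hcol : ∀ x ∈ S, C x ≠ c0)
    (h3 : ∀ x y z : V, x ∈ S → y ∈ S → z ∈ S → x ≠ y → x ≠ z → y ≠ z →
      G.Adj x y ∨ G.Adj x z ∨ G.Adj y z) :
    S.ncard ≤ 2 * (n - 1) := by
  classical
  have hSfin : S.Finite := Set.toFinite S
  set F : Finset V := hSfin.toFinset with hF
  have hmemF : ∀ x, x ∈ F ↔ x ∈ S := fun x => hSfin.mem_toFinset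
  have hsub : F ⊆ (Finset.univ.erase c0).biUnion (fun col => F.filter (fun x => C x = col)) := by
    intro x hx
    rw [Finset.mem_biUnion]
    exact ⟨C x, Finset.mem_erase.2 ⟨hcol x ((hmemF x).1 hx), Finset.mem_univ _⟩,
      Finset.mem_filter.2 ⟨hx, rfl⟩⟩
  have hfilter : ∀ col : Fin n, (F.filter (fun x => C x = col)).card ≤ 2 := by
    intro col
    by_contra hcon
    push_neg at hcon
    obtain ⟨T, hTsub, hT3⟩ := Finset.exists_subset_card_eq hcon
    rw [Finset.card_eq_three] at hT3
    obtain ⟨x, y, z, hxy, hxz, hyz, hTeq⟩ := hT3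
    have hx := hTsub (show x ∈ T by rw [hTeq]; simp)
    have hy := hTsub (show y ∈ T by rw [hTeq]; simp)
    have hz := hTsub (show z ∈ T by rw [hTeq]; simp)
    rw [Finset.mem_filter] at hx hy hz
    have hxS := (hmemF x).1 hx.1
    have hyS := (hmemF y).1 hy.1
    have hzS := (hmemF z).1 hz.1
    rcases h3 x y z hxS hyS hzS hxy hxz hyz with h | h | h
    · exact C.valid h (by rw [hx.2, hy.2])
    · exact C.valid h (by rw [hx.2, hz.2])
    · exact C.valid h (by rw [hy.2, hz.2])
  have hcard : F.card ≤ (Finset.univ.erase c0).card * 2 := by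
    calc F.card ≤ ((Finset.univ.erase c0).biUnion
          (fun col => F.filter (fun x => C x = col))).card := Finset.card_le_card hsub
      _ ≤ ∑ col ∈ Finset.univ.erase c0, (F.filter (fun x => C x = col)).card :=
          Finset.card_biUnion_le
      _ ≤ (Finset.univ.erase c0).card * 2 := by
          rw [← smul_eq_mul]
          exact Finset.sum_le_card_nsmul _ _ 2 (fun col _ => hfilter col)
  have herase : (Finset.univ.erase c0).card = n - 1 := by
    rw [Finset.card_erase_of_mem (Finset.mem_univ _), Finset.card_univ, Fintype.card_fin]
  have hS : S.ncard = F.card := Set.ncard_eq_toFinset_card S hSfin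
  omega

lemma four_distinct {W : Type*} {A : Set W} (hA : A.ncard = 4) (hfin : A.Finite) :
    ∃ a ∈ A, ∃ b ∈ A, ∃ c ∈ A, ∃ d ∈ A,
      a ≠ b ∧ a ≠ c ∧ a ≠ d ∧ b ≠ c ∧ b ≠ d ∧ c ≠ d := by
  obtain ⟨a, ha⟩ : A.Nonempty := Set.nonempty_of_ncard_ne_zero (by omega)
  have h3 : (A \ {a}).ncard = 3 := by
    rw [Set.ncard_diff_singleton_of_mem ha, hA]
  rw [Set.ncard_eq_three] at h3
  obtain ⟨b, c, d, hbc, hbd, hcd, hEq⟩ := h3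
  have hb : b ∈ A \ {a} := by rw [hEq]; simp
  have hc : c ∈ A \ {a} := by rw [hEq]; simp
  have hd : d ∈ A \ {a} := by rw [hEq]; simp
  exact ⟨a, ha, b, hb.1, c, hc.1, d, hd.1,
    fun h => hb.2 (by simp [← h]), fun h => hc.2 (by simp [← h]),
    fun h => hd.2 (by simp [← h]), hbc, hbd, hcd⟩

theorem stmt9 {V : Type*} [Fintype V] (G : SimpleGraph V) (k : ℕ)
    (hP5 : HFree (pathGraph 5) G) (hH : HFree (starPlusP1 4) G)
    (hchi : G.chromaticNumber ≤ ((k - 1 : ℕ) : ℕ∞))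
    (t : ℕ) (ht : 2 ≤ t) (f : ((cycleGraph (2 * t + 1))ᶜ) ↪g G)
    (X : Set (Fin (2 * t + 1))) (hX1 : X.Nonempty) (hX2 : X ≠ Set.univ)
    (SX : Set V) (hSX : SX = {x | x ∉ Set.range f ∧ ∀ i, G.Adj x (f i) ↔ i ∈ X}) :
    (¬ ∃ a ∈ SX, ∃ b ∈ SX, ∃ c ∈ SX, ∃ d ∈ SX,
        a ≠ b ∧ a ≠ c ∧ a ≠ d ∧ b ≠ c ∧ b ≠ d ∧ c ≠ d ∧
        ¬ G.Adj a b ∧ ¬ G.Adj a c ∧ ¬ G.Adj a d ∧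
        ¬ G.Adj b c ∧ ¬ G.Adj b d ∧ ¬ G.Adj c d) ∧
    SX.ncard ≤ ramseyNum 4 (k - 2) := by
  classical
  have hn5 : 5 ≤ 2*t+1 := by omega
  -- membership unfolding
  have hmem : ∀ x ∈ SX, x ∉ Set.range f ∧ ∀ i, G.Adj x (f i) ↔ i ∈ X := by
    intro x hx; rw [hSX] at hx; exact hx
  -- Part 1 : no stable set of size 4
  have part1 : ¬ ∃ a ∈ SX, ∃ b ∈ SX, ∃ c ∈ SX, ∃ d ∈ SX,
      a ≠ b ∧ a ≠ c ∧ a ≠ d ∧ b ≠ c ∧ b ≠ d ∧ c ≠ d ∧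
      ¬ G.Adj a b ∧ ¬ G.Adj a c ∧ ¬ G.Adj a d ∧
      ¬ G.Adj b c ∧ ¬ G.Adj b d ∧ ¬ G.Adj c d := by
    rintro ⟨a, ha, b, hb, c, hc, d, hd, hab, hac, had, hbc, hbd, hcd,
      nab, nac, nad, nbc, nbd, ncd⟩
    obtain ⟨i, hiX, hi1X⟩ := exists_boundary X hX1 hX2
    obtain ⟨har, haj⟩ := hmem a ha
    obtain ⟨hbr, hbj⟩ := hmem b hb
    obtain ⟨hcr, hcj⟩ := hmem c hc
    obtain ⟨hdr, hdj⟩ := hmem d hd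
    have hii1 : i ≠ i + 1 := by
      intro h
      have h2 := left_eq_add.mp h
      rw [Fin.ext_iff, Fin.val_one', Fin.val_zero, Nat.mod_eq_of_lt (by omega)] at h2
      omega
    have Nii1 : ¬ G.Adj (f i) (f (i+1)) := by
      rw [antihole_adj ht f]; rintro ⟨-, -, h⟩; exact h rfl
    refine hH.false (Classical.choice (build_starPlusP1 (f i) a b c d (f (i+1))
      (fun h => har ⟨i, h⟩) (fun h => hbr ⟨i, h⟩)
      (fun h => hcr ⟨i, h⟩) (fun h => hdr ⟨i, h⟩)
      (fun h => hii1 (f.injective h))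
      hab hac had (fun h => har ⟨i+1, h.symm⟩)
      hbc hbd (fun h => hbr ⟨i+1, h.symm⟩)
      hcd (fun h => hcr ⟨i+1, h.symm⟩) (fun h => hdr ⟨i+1, h.symm⟩)
      ((haj i).2 hiX).symm ((hbj i).2 hiX).symm ((hcj i).2 hiX).symm ((hdj i).2 hiX).symm
      Nii1
      nab nac nad (fun h => hi1X ((haj (i+1)).1 h))
      nbc nbd (fun h => hi1X ((hbj (i+1)).1 h))
      ncd (fun h => hi1X ((hcj (i+1)).1 h))
      (fun h => hi1X ((hdj (i+1)).1 h))))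
  refine ⟨part1, ?_⟩
  -- Part 2
  have hSXfin : SX.Finite := Set.toFinite SX
  have hcol : G.Colorable (k-1) := chromaticNumber_le_iff_colorable.mp hchi
  have hn2 : ¬ G.Colorable 2 := antihole_not_two_colorable ht f
  have hk4 : 4 ≤ k := by
    by_contra h
    push_neg at h
    exact hn2 (hcol.mono (by omega))
  by_cases hpair : ∃ a ∈ X, ∃ b ∈ X, G.Adj (f a) (f b)
  · -- X contains an adjacent pair : no clique of size k-2 in SX
    by_contra hlt
    push_neg at hlt
    obtain ⟨i, hiX, j, hjX, hij⟩ := hpair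
    have hR := hasRamseyProp_ramseyNum 4 (k-2)
    rcases ramsey_apply hR G SX hSXfin (le_of_lt hlt) with
      ⟨A, hAS, hA4, hAst⟩ | ⟨B, hBS, hBq, hBcl⟩
    · obtain ⟨a, ha, b, hb, c, hc, d, hd, hab, hac, had, hbc, hbd, hcd⟩ :=
        four_distinct hA4 (hSXfin.subset hAS)
      exact part1 ⟨a, hAS ha, b, hAS hb, c, hAS hc, d, hAS hd, hab, hac, had, hbc, hbd, hcd,
        hAst a ha b hb hab, hAst a ha c hc hac, hAst a ha d hd had,
        hAst b hb c hc hbc, hAst b hb d hd hbd, hAst c hc d hd hcd⟩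
    · -- clique of size k-2 extends to a clique of size k
      have hBfin : B.Finite := hSXfin.subset hBS
      have hfij : f i ≠ f j := G.ne_of_adj hij
      have hfiB : f i ∉ hBfin.toFinset := by
        rw [Set.Finite.mem_toFinset]
        intro h
        exact (hmem _ (hBS h)).1 ⟨i, rfl⟩
      have hfjB : f j ∉ hBfin.toFinset := by
        rw [Set.Finite.mem_toFinset]
        intro h
        exact (hmem _ (hBS h)).1 ⟨j, rfl⟩
      set K : Finset V := insert (f i) (insert (f j) hBfin.toFinset) with hK
      have hKcard : K.card = k := by
        rw [hK, Finset.card_insert_of_notMem, Finset.card_insert_of_notMem hfjB]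
        · rw [Set.ncard_eq_toFinset_card _ hBfin] at hBq
          omega
        · simp only [Finset.mem_insert]
          push_neg
          exact ⟨hfij, hfiB⟩
      have hKclique : G.IsClique (K : Set V) := by
        intro x hx y hy hxy
        simp only [hK, Finset.coe_insert, Set.mem_insert_iff, Finset.mem_coe,
          Set.Finite.mem_toFinset] at hx hy
        have adjB : ∀ z ∈ B, ∀ w : Fin (2*t+1), w ∈ X → G.Adj z (f w) := by
          intro z hz w hw
          exact ((hmem z (hBS hz)).2 w).2 hw
        rcases hx with rfl | rfl | hx <;> rcases hy with rfl | rfl | hy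
        · exact absurd rfl hxy
        · exact hij
        · exact (adjB y hy i hiX).symm
        · exact hij.symm
        · exact absurd rfl hxy
        · exact (adjB y hy j hjX).symm
        · exact adjB x hx i hiX
        · exact adjB x hx j hjX
        · exact hBcl x hx y hy hxy
      have hcf : G.CliqueFree k := hcol.cliqueFree (by omega)
      exact hcf K ⟨hKclique, hKcard⟩
  · -- X contains no adjacent pair
    push_neg at hpair
    -- classification : X = {i} or X = {i, i+1}
    obtain ⟨i0, hi0⟩ := hX1
    have hmemX : ∀ j ∈ X, j = i0 ∨ j = i0 + 1 ∨ i0 = j + 1 := by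
      intro j hj
      have hna := hpair i0 hi0 j hj
      rw [antihole_adj ht f] at hna
      by_contra hcon
      push_neg at hcon
      exact hna ⟨fun h => hcon.1 h.symm, hcon.2.2, hcon.2.1⟩
    have sub_one : ∀ j : Fin (2*t+1), i0 = j + 1 → j = i0 + ((2*t : ℕ) : Fin (2*t+1)) := by
      intro j hj
      have h1 : ((2*t+1 : ℕ) : Fin (2*t+1)) = 0 := by
        rw [Fin.natCast_eq_zero]
      have h2 : ((2*t : ℕ) : Fin (2*t+1)) + 1 = 0 := by
        rw [← h1]; push_cast; ring
      rw [hj]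
      have : j + 1 + ((2*t : ℕ) : Fin (2*t+1)) = j + (((2*t:ℕ) : Fin (2*t+1)) + 1) := by ring
      rw [this, h2, add_zero]
    have hXcase : (∃ i, X = {i}) ∨ (∃ i, X = {i, i + 1}) := by
      by_cases h1 : i0 + 1 ∈ X
      · by_cases h2 : ∃ j ∈ X, i0 = j + 1
        · exfalso
          obtain ⟨j, hj, hij⟩ := h2
          have hjeq := sub_one j hij
          have hadj : G.Adj (f (i0 + ((1:ℕ) : Fin (2*t+1)))) (f (i0 + ((2*t : ℕ) : Fin (2*t+1)))) := by
            rw [shift_adj ht f i0 (by omega) (by omega)]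
            omega
          have e1 : i0 + ((1:ℕ) : Fin (2*t+1)) = i0 + 1 := by push_cast; ring
          rw [e1, ← hjeq] at hadj
          exact hpair (i0+1) h1 j hj hadj
        · right
          refine ⟨i0, ?_⟩
          ext j
          simp only [Set.mem_insert_iff, Set.mem_singleton_iff]
          constructor
          · intro hj
            rcases hmemX j hj with h | h | h
            · exact Or.inl h
            · exact Or.inr h
            · exact absurd ⟨j, hj, h⟩ h2
          · rintro (rfl | rfl)
            · exact hi0
            · exact h1
      · by_cases h2 : ∃ j ∈ X, i0 = j + 1
        · obtain ⟨j, hj, hij⟩ := h2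
          right
          refine ⟨j, ?_⟩
          ext j'
          simp only [Set.mem_insert_iff, Set.mem_singleton_iff]
          constructor
          · intro hj'
            rcases hmemX j' hj' with h | h | h
            · right; rw [h, hij]
            · exfalso; rw [← h] at h1; exact h1 hj'
            · left; exact add_right_cancel (h.symm.trans hij)
          · rintro (rfl | rfl)
            · exact hj
            · rw [← hij]; exact hi0
        · left
          refine ⟨i0, ?_⟩
          ext j
          simp only [Set.mem_singleton_iff]
          constructor
          · intro hj
            rcases hmemX j hj with h | h | h
            · exact h
            · exfalso; rw [← h] at h1; exact h1 hj
            · exact absurd ⟨j, hj, h⟩ h2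
          · rintro rfl; exact hi0
    -- helper facts about shifts
    have e0 : ∀ i : Fin (2*t+1), i + ((0:ℕ) : Fin (2*t+1)) = i := by intro i; simp
    have e1 : ∀ i : Fin (2*t+1), i + ((1:ℕ) : Fin (2*t+1)) = i + 1 := by
      intro i; push_cast; ring
    rcases hXcase with ⟨i, hXi⟩ | ⟨i, hXi⟩
    · -- singleton : SX = ∅
      have hempty : SX = ∅ := by
        ext x
        simp only [Set.mem_empty_iff_false, iff_false]
        intro hx
        obtain ⟨hxr, hxj⟩ := hmem x hx
        -- memberships
        have memiff : ∀ c : ℕ, c < 2*t+1 → (i + ((c:ℕ) : Fin (2*t+1)) ∈ X ↔ c = 0) := by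
          intro c hc
          rw [hXi, Set.mem_singleton_iff]
          constructor
          · intro h
            have := (shift_eq_shift_iff i hc (show 0 < 2*t+1 by omega)).1 (by rw [e0]; exact h)
            omega
          · rintro rfl; rw [e0]
        -- vertices: x, f i, f(i+(2t-1)), f(i+1), f(i+2t)
        have hAx : G.Adj x (f (i + ((0:ℕ) : Fin (2*t+1)))) := (hxj _).2 ((memiff 0 (by omega)).2 rfl)
        have hN1 : ¬ G.Adj x (f (i + ((2*t-1:ℕ) : Fin (2*t+1)))) := fun h => by
          have := (hxj _).1 h; rw [memiff _ (by omega)] at this; omega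
        have hN2 : ¬ G.Adj x (f (i + ((1:ℕ) : Fin (2*t+1)))) := fun h => by
          have := (hxj _).1 h; rw [memiff _ (by omega)] at this; omega
        have hN3 : ¬ G.Adj x (f (i + ((2*t:ℕ) : Fin (2*t+1)))) := fun h => by
          have := (hxj _).1 h; rw [memiff _ (by omega)] at this; omega
        have A12 : G.Adj (f (i + ((0:ℕ) : Fin (2*t+1)))) (f (i + ((2*t-1:ℕ) : Fin (2*t+1)))) := by
          rw [shift_adj ht f i (by omega) (by omega)]; omega
        have A23 : G.Adj (f (i + ((2*t-1:ℕ) : Fin (2*t+1)))) (f (i + ((1:ℕ) : Fin (2*t+1)))) := by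
          rw [shift_adj ht f i (by omega) (by omega)]; omega
        have A34 : G.Adj (f (i + ((1:ℕ) : Fin (2*t+1)))) (f (i + ((2*t:ℕ) : Fin (2*t+1)))) := by
          rw [shift_adj ht f i (by omega) (by omega)]; omega
        have N13 : ¬ G.Adj (f (i + ((0:ℕ) : Fin (2*t+1)))) (f (i + ((1:ℕ) : Fin (2*t+1)))) := by
          rw [shift_adj ht f i (by omega) (by omega)]; omega
        have N14 : ¬ G.Adj (f (i + ((0:ℕ) : Fin (2*t+1)))) (f (i + ((2*t:ℕ) : Fin (2*t+1)))) := by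
          rw [shift_adj ht f i (by omega) (by omega)]; omega
        have N24 : ¬ G.Adj (f (i + ((2*t-1:ℕ) : Fin (2*t+1)))) (f (i + ((2*t:ℕ) : Fin (2*t+1)))) := by
          rw [shift_adj ht f i (by omega) (by omega)]; omega
        have hd : ∀ c d : ℕ, c < 2*t+1 → d < 2*t+1 → c ≠ d →
            f (i + ((c:ℕ) : Fin (2*t+1))) ≠ f (i + ((d:ℕ) : Fin (2*t+1))) := by
          intro c d hc hdlt hcd h
          exact (shift_ne_shift i hc hdlt hcd) (f.injective h)
        have hxne : ∀ c : ℕ, x ≠ f (i + ((c:ℕ) : Fin (2*t+1))) := by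
          intro c h
          exact hxr ⟨_, h.symm⟩
        exact hP5.false (Classical.choice (build_pathGraph5 x
          (f (i + ((0:ℕ) : Fin (2*t+1)))) (f (i + ((2*t-1:ℕ) : Fin (2*t+1))))
          (f (i + ((1:ℕ) : Fin (2*t+1)))) (f (i + ((2*t:ℕ) : Fin (2*t+1))))
          (hxne 0) (hxne (2*t-1)) (hxne 1) (hxne (2*t))
          (hd 0 (2*t-1) (by omega) (by omega) (by omega))
          (hd 0 1 (by omega) (by omega) (by omega))
          (hd 0 (2*t) (by omega) (by omega) (by omega))
          (hd (2*t-1) 1 (by omega) (by omega) (by omega))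
          (hd (2*t-1) (2*t) (by omega) (by omega) (by omega))
          (hd 1 (2*t) (by omega) (by omega) (by omega))
          hAx A12 A23 A34
          hN1 hN2 hN3 N13 N14 N24))
      rw [hempty]
      simp
    · -- pair case : X = {i, i+1}
      have memiff : ∀ c : ℕ, c < 2*t+1 → (i + ((c:ℕ) : Fin (2*t+1)) ∈ X ↔ (c = 0 ∨ c = 1)) := by
        intro c hc
        rw [hXi, Set.mem_insert_iff, Set.mem_singleton_iff]
        constructor
        · rintro (h | h)
          · left
            have := (shift_eq_shift_iff i hc (show 0 < 2*t+1 by omega)).1 (by rw [e0]; exact h)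
            omega
          · right
            have := (shift_eq_shift_iff i hc (show 1 < 2*t+1 by omega)).1 (by rw [e1]; exact h)
            omega
        · rintro (rfl | rfl)
          · left; rw [e0]
          · right; rw [e1]
      have hiX : i ∈ X := by rw [hXi]; simp
      -- stability 2 within SX
      have h3 : ∀ x y z : V, x ∈ SX → y ∈ SX → z ∈ SX → x ≠ y → x ≠ z → y ≠ z →
          G.Adj x y ∨ G.Adj x z ∨ G.Adj y z := by
        intro x y z hx hy hz hxy hxz hyz
        by_contra hcon
        push_neg at hcon
        obtain ⟨nxy, nxz, nyz⟩ := hcon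
        obtain ⟨hxr, hxj⟩ := hmem x hx
        obtain ⟨hyr, hyj⟩ := hmem y hy
        obtain ⟨hzr, hzj⟩ := hmem z hz
        have A04 : G.Adj (f (i + ((0:ℕ) : Fin (2*t+1)))) (f (i + ((2*t-1:ℕ) : Fin (2*t+1)))) := by
          rw [shift_adj ht f i (by omega) (by omega)]; omega
        have N05 : ¬ G.Adj (f (i + ((0:ℕ) : Fin (2*t+1)))) (f (i + ((2*t:ℕ) : Fin (2*t+1)))) := by
          rw [shift_adj ht f i (by omega) (by omega)]; omega
        have N45 : ¬ G.Adj (f (i + ((2*t-1:ℕ) : Fin (2*t+1)))) (f (i + ((2*t:ℕ) : Fin (2*t+1)))) := by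
          rw [shift_adj ht f i (by omega) (by omega)]; omega
        have hd : ∀ c d : ℕ, c < 2*t+1 → d < 2*t+1 → c ≠ d →
            f (i + ((c:ℕ) : Fin (2*t+1))) ≠ f (i + ((d:ℕ) : Fin (2*t+1))) := by
          intro c d hc hdlt hcd h
          exact (shift_ne_shift i hc hdlt hcd) (f.injective h)
        have adj0 : ∀ w : V, w ∈ SX → G.Adj (f (i + ((0:ℕ) : Fin (2*t+1)))) w := by
          intro w hw
          exact (((hmem w hw).2 _).2 ((memiff 0 (by omega)).2 (Or.inl rfl))).symm
        have nadj1 : ∀ w : V, w ∈ SX → ¬ G.Adj w (f (i + ((2*t-1:ℕ) : Fin (2*t+1)))) := by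
          intro w hw h
          have := ((hmem w hw).2 _).1 h
          rw [memiff _ (by omega)] at this
          omega
        have nadj2 : ∀ w : V, w ∈ SX → ¬ G.Adj w (f (i + ((2*t:ℕ) : Fin (2*t+1)))) := by
          intro w hw h
          have := ((hmem w hw).2 _).1 h
          rw [memiff _ (by omega)] at this
          omega
        have hwne : ∀ (w : V), w ∈ SX → ∀ c : ℕ, w ≠ f (i + ((c:ℕ) : Fin (2*t+1))) := by
          intro w hw c h
          exact (hmem w hw).1 ⟨_, h.symm⟩
        exact hH.false (Classical.choice (build_starPlusP1
          (f (i + ((0:ℕ) : Fin (2*t+1)))) x y z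
          (f (i + ((2*t-1:ℕ) : Fin (2*t+1)))) (f (i + ((2*t:ℕ) : Fin (2*t+1))))
          ((hwne x hx 0).symm) ((hwne y hy 0).symm) ((hwne z hz 0).symm)
          (hd 0 (2*t-1) (by omega) (by omega) (by omega))
          (hd 0 (2*t) (by omega) (by omega) (by omega))
          hxy hxz (hwne x hx (2*t-1)) (hwne x hx (2*t))
          hyz (hwne y hy (2*t-1)) (hwne y hy (2*t))
          (hwne z hz (2*t-1)) (hwne z hz (2*t))
          (hd (2*t-1) (2*t) (by omega) (by omega) (by omega))
          (adj0 x hx) (adj0 y hy) (adj0 z hz) A04 N05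
          nxy nxz (nadj1 x hx) (nadj2 x hx)
          nyz (nadj1 y hy) (nadj2 y hy)
          (nadj1 z hz) (nadj2 z hz)
          N45))
      -- counting
      obtain ⟨C⟩ := hcol
      have hcnt : SX.ncard ≤ 2 * (k - 1 - 1) := by
        apply count_le_of_stability C (C (f i))
        · intro x hx
          have : G.Adj x (f i) := ((hmem x hx).2 i).2 hiX
          exact C.valid this
        · exact h3
      have hlow : 2 * (k-2) ≤ ramseyNum 4 (k-2) :=
        ramsey_lower (by omega) (hasRamseyProp_ramseyNum 4 (k-2))
      omega
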